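/- Fix α ∈ (0,1). For 0 ≤ b, c ≤ ℓ define M^n_H(b,c) as the probability that the sum of two independent binomial random variables with parameters (b,(1+ρⁿ)/2) and (ℓ−b,(1−ρⁿ)/2) equals c, where ρ = 1−2q. Then for every fixed n ≥ 1 and a ≥ 0, along any sequences ℓ_m → ∞, q_m → 0 with ℓ_m q_m → a, we have M^n_H(⌊αℓ_m⌋, ⌊αℓ_m⌋) → φ_{n,α}(a) = e^{−an} Σ_{k≥0} (√(4α(1−α))·an)^{2k}/(2^{2k}(k!)²). -/

import Mathlib

open scoped BigOperators
open Filter Topology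

/-- `MH ℓ ρ n b c` is the probability that the sum of two independent binomial
random variables with parameters `(b, (1+ρⁿ)/2)` and `(ℓ-b, (1-ρⁿ)/2)`
equals `c`, written as the explicit convolution sum. -/
noncomputable def MH (ℓ : ℕ) (ρ : ℝ) (n : ℕ) (b c : ℕ) : ℝ :=
  ∑ j ∈ Finset.range (c + 1),
    (Nat.choose b j : ℝ) * ((1 + ρ ^ n) / 2) ^ j * ((1 - ρ ^ n) / 2) ^ (b - j) *
      ((Nat.choose (ℓ - b) (c - j) : ℝ) * ((1 - ρ ^ n) / 2) ^ (c - j) *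
        ((1 + ρ ^ n) / 2) ^ (ℓ - b - (c - j)))

lemma aux_choose (i : ℕ) (c : ℕ → ℕ) (p : ℕ → ℝ) (L : ℝ)
    (hc : Tendsto (fun m => (c m : ℝ)) atTop atTop)
    (hcp : Tendsto (fun m => (c m : ℝ) * p m) atTop (𝓝 L))
    (hp : Tendsto p atTop (𝓝 0)) :
    Tendsto (fun m => (Nat.choose (c m) i : ℝ) * p m ^ i) atTop
      (𝓝 (L ^ i / (Nat.factorial i : ℝ))) := by
  have hev : ∀ᶠ m in atTop, (i : ℝ) ≤ (c m : ℝ) := hc.eventually_ge_atTop i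
  have hfac : Tendsto (fun m => (∏ t ∈ Finset.range i, ((c m : ℝ) - t) * p m)
      / (Nat.factorial i : ℝ)) atTop (𝓝 (L ^ i / (Nat.factorial i : ℝ))) := by
    have hprod : Tendsto (fun m => ∏ t ∈ Finset.range i, ((c m : ℝ) - t) * p m)
        atTop (𝓝 (∏ _t ∈ Finset.range i, L)) := by
      refine tendsto_finset_prod _ (fun t _ => ?_)
      have : Tendsto (fun m => (c m : ℝ) * p m - (t : ℝ) * p m) atTop (𝓝 (L - (t:ℝ) * 0)) :=
        hcp.sub (hp.const_mul _)
      simpa [sub_mul] using this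
    rw [Finset.prod_const, Finset.card_range] at hprod
    exact hprod.div_const _
  refine hfac.congr' ?_
  filter_upwards [hev] with m hm
  have hic : i ≤ c m := by exact_mod_cast hm
  have hcast : ((Nat.descFactorial (c m) i : ℕ) : ℝ)
      = ∏ t ∈ Finset.range i, ((c m : ℝ) - t) := by
    rw [Nat.descFactorial_eq_prod_range, Nat.cast_prod]
    refine Finset.prod_congr rfl (fun t ht => ?_)
    have : t ≤ c m := le_trans (le_of_lt (Finset.mem_range.mp ht)) hic
    push_cast [Nat.cast_sub this]
    ring
  have hdf : ((Nat.descFactorial (c m) i : ℕ) : ℝ)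
      = (Nat.factorial i : ℝ) * (Nat.choose (c m) i : ℝ) := by
    exact_mod_cast congrArg (Nat.cast (R := ℝ)) (Nat.descFactorial_eq_factorial_mul_choose (c m) i)
  have hfne : (Nat.factorial i : ℝ) ≠ 0 := by
    exact_mod_cast (Nat.factorial_ne_zero i)
  rw [Finset.prod_mul_distrib, Finset.prod_const, Finset.card_range, ← hcast, hdf]
  field_simp

lemma aux_exp (N : ℕ → ℕ) (p : ℕ → ℝ) (L : ℝ)
    (hp0 : ∀ᶠ m in atTop, 0 < p m) (hp1 : ∀ᶠ m in atTop, p m < 1)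
    (hp : Tendsto p atTop (𝓝 0))
    (hNp : Tendsto (fun m => (N m : ℝ) * p m) atTop (𝓝 L)) :
    Tendsto (fun m => (1 - p m) ^ (N m)) atTop (𝓝 (Real.exp (-L))) := by
  have h1 : HasDerivAt (fun x : ℝ => 1 - x) (-1) 0 := by
    simpa using (hasDerivAt_id (0:ℝ)).const_sub 1
  have h2 : HasDerivAt (fun x : ℝ => Real.log (1 - x)) (-1) 0 := by
    have := (Real.hasDerivAt_log (by norm_num : (1:ℝ) - 0 ≠ 0)).comp 0 h1
    simpa [Function.comp_def] using this
  rw [hasDerivAt_iff_tendsto_slope] at h2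
  have hslope : Tendsto (fun x : ℝ => Real.log (1 - x) / x) (𝓝[≠] 0) (𝓝 (-1)) := by
    refine h2.congr (fun x => ?_)
    simp [slope_def_field, div_eq_inv_mul]
  have hpne : Tendsto p atTop (𝓝[≠] (0:ℝ)) :=
    tendsto_nhdsWithin_of_tendsto_nhds_of_eventually_within _ hp
      (hp0.mono (fun m h => ne_of_gt h))
  have hcomp : Tendsto (fun m => Real.log (1 - p m) / p m) atTop (𝓝 (-1)) :=
    hslope.comp hpne
  have hmul : Tendsto (fun m => (N m : ℝ) * p m * (Real.log (1 - p m) / p m)) atTop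
      (𝓝 (L * (-1))) := hNp.mul hcomp
  have hNl : Tendsto (fun m => (N m : ℝ) * Real.log (1 - p m)) atTop (𝓝 (-L)) := by
    rw [show L * (-1) = -L by ring] at hmul
    refine hmul.congr' ?_
    filter_upwards [hp0] with m hm
    field_simp
  have := (Real.continuous_exp.tendsto _).comp hNl
  refine this.congr' ?_
  filter_upwards [hp1] with m hm
  have hpos : 0 < 1 - p m := by linarith
  simp only [Function.comp]
  rw [Real.exp_nat_mul, Real.exp_log hpos]

/-- In the long chain regime `ℓ_m → ∞`, `q_m → 0`, `ℓ_m q_m → a`, one has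
`M^n_H(⌊αℓ_m⌋, ⌊αℓ_m⌋) → φ_{n,α}(a) =
e^{-an} ∑_{k≥0} (√(4α(1-α)) an)^{2k}/(2^{2k}(k!)²)`, where `ρ_m = 1 - 2 q_m`. -/
theorem MH_floor_tendsto_phi_alpha
    (α : ℝ) (hα0 : 0 < α) (hα1 : α < 1)
    (n : ℕ) (hn : 1 ≤ n) (a : ℝ) (ha : 0 ≤ a)
    (ℓ : ℕ → ℕ) (q : ℕ → ℝ)
    (hℓ : Tendsto ℓ atTop atTop)
    (hq0 : ∀ m, 0 < q m) (hq1 : ∀ m, q m < 1 / 2)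
    (hq : Tendsto q atTop (𝓝 0))
    (hlq : Tendsto (fun m => (ℓ m : ℝ) * q m) atTop (𝓝 a)) :
    Tendsto
      (fun m => MH (ℓ m) (1 - 2 * q m) n (Nat.floor (α * ℓ m)) (Nat.floor (α * ℓ m)))
      atTop
      (𝓝 (Real.exp (-a * n) *
        ∑' k : ℕ, (Real.sqrt (4 * α * (1 - α)) * a * n) ^ (2 * k) /
          (2 ^ (2 * k) * ((Nat.factorial k : ℝ)) ^ 2))) := by
  set b : ℕ → ℕ := fun m => Nat.floor (α * ℓ m) with hbdef
  set P : ℕ → ℝ := fun m => q m * ∑ k ∈ Finset.range n, (1 - 2 * q m) ^ k with hPdef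
  have hρpos : ∀ m, 0 < 1 - 2 * q m := fun m => by have := hq1 m; linarith
  have hρlt : ∀ m, 1 - 2 * q m < 1 := fun m => by have := hq0 m; linarith
  have hPeq : ∀ m, (1 - (1 - 2 * q m) ^ n) / 2 = P m := by
    intro m
    have h := geom_sum_mul (1 - 2 * q m) n
    rw [hPdef]
    linear_combination (1/2 : ℝ) * h
  have hP0 : ∀ m, 0 < P m := by
    intro m
    rw [← hPeq m]
    have h1 : (1 - 2 * q m) ^ n < 1 :=
      pow_lt_one₀ (hρpos m).le (hρlt m) (by omega)
    linarith
  have hP1 : ∀ m, P m < 1 := by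
    intro m
    rw [← hPeq m]
    have h1 : 0 < (1 - 2 * q m) ^ n := pow_pos (hρpos m) n
    linarith
  have hSn : Tendsto (fun m => ∑ k ∈ Finset.range n, (1 - 2 * q m) ^ k) atTop (𝓝 (n : ℝ)) := by
    have hρ : Tendsto (fun m => (1 : ℝ) - 2 * q m) atTop (𝓝 1) := by
      have := tendsto_const_nhds (α := ℕ) (x := (1:ℝ)) |>.sub (hq.const_mul 2)
      simpa using this
    have h := tendsto_finset_sum (Finset.range n) (fun k (_ : k ∈ Finset.range n) => hρ.pow k)
    simpa using h
  have hPlim : Tendsto P atTop (𝓝 0) := by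
    have := hq.mul hSn
    simpa [hPdef] using this
  have hℓR : Tendsto (fun m => (ℓ m : ℝ)) atTop atTop := tendsto_natCast_atTop_atTop.comp hℓ
  have hℓP : Tendsto (fun m => (ℓ m : ℝ) * P m) atTop (𝓝 (a * n)) := by
    have := hlq.mul hSn
    simpa [hPdef, mul_assoc] using this
  have hb_le : ∀ m, (b m : ℝ) ≤ α * ℓ m := fun m => Nat.floor_le (by positivity)
  have hb_gt : ∀ m, α * ℓ m - 1 < (b m : ℝ) := fun m => by
    have := Nat.lt_floor_add_one (α * (ℓ m : ℝ)); simp only [hbdef]; linarith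
  have hbℓ : ∀ m, b m ≤ ℓ m := by
    intro m
    have h1 : (b m : ℝ) ≤ (ℓ m : ℝ) := by nlinarith [hb_le m, (Nat.cast_nonneg (ℓ m) : (0:ℝ) ≤ (ℓ m : ℝ))]
    exact_mod_cast h1
  have hbatop : Tendsto (fun m => (b m : ℝ)) atTop atTop := by
    refine tendsto_atTop_mono (fun m => (hb_gt m).le) ?_
    have h1 : Tendsto (fun m => α * (ℓ m : ℝ)) atTop atTop := hℓR.const_mul_atTop hα0
    simpa [sub_eq_add_neg] using tendsto_atTop_add_const_right atTop (-1 : ℝ) h1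
  have hbP : Tendsto (fun m => (b m : ℝ) * P m) atTop (𝓝 (α * (a * n))) := by
    have hup : Tendsto (fun m => α * (ℓ m : ℝ) * P m) atTop (𝓝 (α * (a * n))) := by
      simpa [mul_assoc] using hℓP.const_mul α
    have hlow : Tendsto (fun m => α * (ℓ m : ℝ) * P m - P m) atTop (𝓝 (α * (a * n))) := by
      simpa using hup.sub hPlim
    refine tendsto_of_tendsto_of_tendsto_of_le_of_le hlow hup ?_ ?_
    · intro m
      have h := mul_le_mul_of_nonneg_right (hb_gt m).le (hP0 m).le
      calc α * (ℓ m : ℝ) * P m - P m = (α * (ℓ m : ℝ) - 1) * P m := by ring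
        _ ≤ (b m : ℝ) * P m := h
    · intro m; exact mul_le_mul_of_nonneg_right (hb_le m) (hP0 m).le
  have hlb_cast : ∀ m, ((ℓ m - b m : ℕ) : ℝ) = (ℓ m : ℝ) - b m := fun m => Nat.cast_sub (hbℓ m)
  have hlbP : Tendsto (fun m => ((ℓ m - b m : ℕ) : ℝ) * P m) atTop (𝓝 ((1 - α) * (a * n))) := by
    have h2 := hℓP.sub hbP
    rw [show a * n - α * (a * n) = (1 - α) * (a * n) by ring] at h2
    exact h2.congr (fun m => by rw [hlb_cast m]; ring)
  have hlbatop : Tendsto (fun m => ((ℓ m - b m : ℕ) : ℝ)) atTop atTop := by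
    refine tendsto_atTop_mono (fun m => ?_) (hℓR.const_mul_atTop (by linarith : (0:ℝ) < 1 - α))
    rw [hlb_cast m]; nlinarith [hb_le m]
  set g : ℕ → ℕ → ℝ := fun m i =>
    (Nat.choose (b m) i : ℝ) * (1 - P m) ^ (b m - i) * (P m) ^ i *
      ((Nat.choose (ℓ m - b m) i : ℝ) * (P m) ^ i * (1 - P m) ^ (ℓ m - b m - i)) with hgdef
  have key : ∀ m, MH (ℓ m) (1 - 2 * q m) n (b m) (b m) = ∑' i, g m i := by
    intro m
    have e1 : (1 - (1 - 2 * q m) ^ n) / 2 = P m := hPeq m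
    have e2 : (1 + (1 - 2 * q m) ^ n) / 2 = 1 - P m := by rw [← e1]; ring
    have hvan : ∀ i ∉ Finset.range (b m + 1), g m i = 0 := by
      intro i hi
      have : b m < i := by simpa [Nat.lt_succ_iff] using Finset.mem_range.not.mp hi
      simp [hgdef, Nat.choose_eq_zero_of_lt this]
    rw [MH, e1, e2, ← Finset.sum_range_reflect, tsum_eq_sum hvan]
    refine Finset.sum_congr rfl (fun i hi => ?_)
    have hib : i ≤ b m := Nat.lt_succ_iff.mp (Finset.mem_range.mp hi)
    rw [Nat.add_sub_cancel, Nat.sub_sub_self hib, Nat.choose_symm hib]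
  -- bound
  obtain ⟨K0, hK0⟩ := hℓP.bddAbove_range
  set K := max K0 0 with hKdef
  have hKnn : (0:ℝ) ≤ K := le_max_right _ _
  have hKℓ : ∀ m, (ℓ m : ℝ) * P m ≤ K :=
    fun m => le_trans (hK0 (Set.mem_range_self m)) (le_max_left _ _)
  have hKb : ∀ m, (b m : ℝ) * P m ≤ K := by
    intro m
    refine le_trans ?_ (hKℓ m)
    have : (b m : ℝ) ≤ (ℓ m : ℝ) := by exact_mod_cast hbℓ m
    exact mul_le_mul_of_nonneg_right this (hP0 m).le
  have hKlb : ∀ m, ((ℓ m - b m : ℕ) : ℝ) * P m ≤ K := by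
    intro m
    refine le_trans ?_ (hKℓ m)
    have : ((ℓ m - b m : ℕ) : ℝ) ≤ (ℓ m : ℝ) := by
      exact_mod_cast Nat.sub_le (ℓ m) (b m)
    exact mul_le_mul_of_nonneg_right this (hP0 m).le
  set bound : ℕ → ℝ := fun i => K ^ i / (Nat.factorial i : ℝ) * (K ^ i / (Nat.factorial i : ℝ))
    with hbounddef
  have hfacge : ∀ i : ℕ, (1:ℝ) ≤ (Nat.factorial i : ℝ) := by
    intro i; exact_mod_cast (Nat.factorial_pos i)
  have hsummable : Summable bound := by
    refine Summable.of_nonneg_of_le (fun i => by positivity) (fun i => ?_)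
      (Real.summable_pow_div_factorial (K ^ 2))
    have h1 : K ^ i / (Nat.factorial i : ℝ) ≤ K ^ i :=
      div_le_self (by positivity) (hfacge i)
    calc K ^ i / (Nat.factorial i : ℝ) * (K ^ i / (Nat.factorial i : ℝ))
        ≤ K ^ i / (Nat.factorial i : ℝ) * K ^ i := by
          exact mul_le_mul_of_nonneg_left h1 (by positivity)
      _ = (K ^ 2) ^ i / (Nat.factorial i : ℝ) := by
          rw [div_mul_eq_mul_div, ← pow_add, ← two_mul, pow_mul]
  -- pieces for the choose bounds
  have hchoosePle : ∀ (c : ℕ) (m i : ℕ), (c : ℝ) * P m ≤ K →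
      (Nat.choose c i : ℝ) * P m ^ i ≤ K ^ i / (Nat.factorial i : ℝ) := by
    intro c m i hc
    have hdf : (Nat.factorial i : ℝ) * (Nat.choose c i : ℝ) ≤ (c : ℝ) ^ i := by
      have h := Nat.descFactorial_le_pow c i
      rw [Nat.descFactorial_eq_factorial_mul_choose] at h
      exact_mod_cast h
    have hPn : (0:ℝ) ≤ P m := (hP0 m).le
    have h2 : (Nat.choose c i : ℝ) * P m ^ i ≤ (c : ℝ) ^ i * P m ^ i / (Nat.factorial i : ℝ) := by
      rw [le_div_iff₀ (by positivity : (0:ℝ) < (Nat.factorial i : ℝ))]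
      nlinarith [pow_nonneg hPn i, hdf]
    refine h2.trans ?_
    have h3 : (c : ℝ) ^ i * P m ^ i ≤ K ^ i := by
      rw [← mul_pow]
      exact pow_le_pow_left₀ (by positivity) hc i
    have h4 : (0:ℝ) < (Nat.factorial i : ℝ) := by positivity
    exact div_le_div_of_nonneg_right h3 h4.le
  -- nonnegativity of g
  have hgnn : ∀ m i, 0 ≤ g m i := by
    intro m i
    have h1 : (0:ℝ) ≤ P m := (hP0 m).le
    have h2 : (0:ℝ) ≤ 1 - P m := by linarith [hP1 m]
    have := hgdef
    positivity
  -- the uniform bound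
  have hbound : ∀ m i, ‖g m i‖ ≤ bound i := by
    intro m i
    rw [Real.norm_eq_abs, abs_of_nonneg (hgnn m i)]
    have h1 : (0:ℝ) ≤ P m := (hP0 m).le
    have h2 : (0:ℝ) ≤ 1 - P m := by linarith [hP1 m]
    have hpow1 : (1 - P m) ^ (b m - i) ≤ 1 := pow_le_one₀ h2 (by linarith)
    have hpow2 : (1 - P m) ^ (ℓ m - b m - i) ≤ 1 := pow_le_one₀ h2 (by linarith)
    have hfirst : (Nat.choose (b m) i : ℝ) * (1 - P m) ^ (b m - i) * (P m) ^ i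
        ≤ K ^ i / (Nat.factorial i : ℝ) := by
      have hle := hchoosePle (b m) m i (hKb m)
      have hnn : (0:ℝ) ≤ (Nat.choose (b m) i : ℝ) * P m ^ i :=
        mul_nonneg (Nat.cast_nonneg _) (pow_nonneg h1 i)
      calc (Nat.choose (b m) i : ℝ) * (1 - P m) ^ (b m - i) * (P m) ^ i
          = (Nat.choose (b m) i : ℝ) * P m ^ i * (1 - P m) ^ (b m - i) := by ring
        _ ≤ (Nat.choose (b m) i : ℝ) * P m ^ i * 1 :=
            mul_le_mul_of_nonneg_left hpow1 hnn
        _ = (Nat.choose (b m) i : ℝ) * P m ^ i := mul_one _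
        _ ≤ K ^ i / (Nat.factorial i : ℝ) := hle
    have hsecond : (Nat.choose (ℓ m - b m) i : ℝ) * (P m) ^ i * (1 - P m) ^ (ℓ m - b m - i)
        ≤ K ^ i / (Nat.factorial i : ℝ) := by
      have hle := hchoosePle (ℓ m - b m) m i (hKlb m)
      have hnn : (0:ℝ) ≤ (Nat.choose (ℓ m - b m) i : ℝ) * P m ^ i :=
        mul_nonneg (Nat.cast_nonneg _) (pow_nonneg h1 i)
      calc (Nat.choose (ℓ m - b m) i : ℝ) * (P m) ^ i * (1 - P m) ^ (ℓ m - b m - i)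
          ≤ (Nat.choose (ℓ m - b m) i : ℝ) * P m ^ i * 1 :=
            mul_le_mul_of_nonneg_left hpow2 hnn
        _ = (Nat.choose (ℓ m - b m) i : ℝ) * P m ^ i := mul_one _
        _ ≤ K ^ i / (Nat.factorial i : ℝ) := hle
    have hfnn : (0:ℝ) ≤ (Nat.choose (b m) i : ℝ) * (1 - P m) ^ (b m - i) * (P m) ^ i := by
      positivity
    have hsnn : (0:ℝ) ≤ (Nat.choose (ℓ m - b m) i : ℝ) * (P m) ^ i
        * (1 - P m) ^ (ℓ m - b m - i) := by positivity
    exact mul_le_mul hfirst hsecond hsnn (by positivity)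
  -- termwise limits
  have hterm : ∀ i : ℕ, Tendsto (fun m => g m i) atTop
      (𝓝 (Real.exp (-a * n) * ((Real.sqrt (4 * α * (1 - α)) * a * n) ^ (2 * i) /
        (2 ^ (2 * i) * ((Nat.factorial i : ℝ)) ^ 2)))) := by
    intro i
    have hA := aux_choose i b P (α * (a * n)) hbatop hbP hPlim
    have hB := aux_choose i (fun m => ℓ m - b m) P ((1 - α) * (a * n)) hlbatop hlbP hPlim
    have hNp : Tendsto (fun m => ((ℓ m - 2 * i : ℕ) : ℝ) * P m) atTop (𝓝 (a * n)) := by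
      have hev : ∀ᶠ m in atTop, 2 * i ≤ ℓ m := hℓ.eventually_ge_atTop _
      have h2 : Tendsto (fun m => (ℓ m : ℝ) * P m - (2 * i : ℝ) * P m) atTop
          (𝓝 (a * n - (2 * i : ℝ) * 0)) := hℓP.sub (hPlim.const_mul _)
      rw [mul_zero, sub_zero] at h2
      refine h2.congr' ?_
      filter_upwards [hev] with m hm
      rw [Nat.cast_sub hm]
      push_cast
      ring
    have hC := aux_exp (fun m => ℓ m - 2 * i) P (a * n)
      (Filter.Eventually.of_forall hP0) (Filter.Eventually.of_forall hP1) hPlim hNp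
    have hprod := (hA.mul hB).mul hC
    have hval : ((α * (a * n)) ^ i / (Nat.factorial i : ℝ)) *
        (((1 - α) * (a * n)) ^ i / (Nat.factorial i : ℝ)) * Real.exp (-(a * n))
        = Real.exp (-a * n) * ((Real.sqrt (4 * α * (1 - α)) * a * n) ^ (2 * i) /
          (2 ^ (2 * i) * ((Nat.factorial i : ℝ)) ^ 2)) := by
      have hs : Real.sqrt (4 * α * (1 - α)) ^ 2 = 4 * α * (1 - α) :=
        Real.sq_sqrt (by nlinarith)
      have h4 : (Real.sqrt (4 * α * (1 - α)) * a * (n:ℝ)) ^ (2 * i)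
          = (4 * α * (1 - α)) ^ i * ((a * (n:ℝ)) ^ 2) ^ i := by
        rw [pow_mul, show (Real.sqrt (4 * α * (1 - α)) * a * (n:ℝ)) ^ 2
          = Real.sqrt (4 * α * (1 - α)) ^ 2 * (a * (n:ℝ)) ^ 2 by ring, hs, mul_pow]
      have h2p : (2:ℝ) ^ (2 * i) = 4 ^ i := by
        rw [pow_mul]; norm_num
      rw [h4, h2p, neg_mul]
      have hfne : ((Nat.factorial i : ℝ)) ≠ 0 := by positivity
      rw [show ((4:ℝ) * α * (1 - α)) ^ i = 4 ^ i * (α ^ i * (1 - α) ^ i) by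
        rw [mul_pow, mul_pow, mul_assoc], mul_pow α, mul_pow (1 - α)]
      field_simp
      ring
    rw [hval] at hprod
    refine hprod.congr' ?_
    have hev1 : ∀ᶠ m in atTop, (i : ℝ) ≤ (b m : ℝ) := hbatop.eventually_ge_atTop _
    have hev2 : ∀ᶠ m in atTop, (i : ℝ) ≤ ((ℓ m - b m : ℕ) : ℝ) := hlbatop.eventually_ge_atTop _
    filter_upwards [hev1, hev2] with m hm1 hm2
    have hib : i ≤ b m := by exact_mod_cast hm1
    have hilb : i ≤ ℓ m - b m := by exact_mod_cast hm2
    have hexp : (b m - i) + (ℓ m - b m - i) = ℓ m - 2 * i := by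
      have := hbℓ m; omega
    show (Nat.choose (b m) i : ℝ) * P m ^ i * ((Nat.choose (ℓ m - b m) i : ℝ) * P m ^ i) *
        (1 - P m) ^ (ℓ m - 2 * i) = g m i
    rw [hgdef, ← hexp, pow_add]
    ring
  -- conclude
  have hfun : (fun m => MH (ℓ m) (1 - 2 * q m) n (b m) (b m)) = fun m => ∑' i, g m i :=
    funext key
  rw [← tsum_mul_left, hfun]
  exact tendsto_tsum_of_dominated_convergence hsummable hterm
    (Filter.Eventually.of_forall (fun m => hbound m))
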